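/- Let n ≥ 2 and let γ be a neighbour-sum-distinguishing total 2-colouring of the complete graph K_n such that some vertex v has a monochromatic palette of 1's, i.e., γ(v) = 1 and every edge incident with v is coloured 1. If n = 2k then exactly k(k+1) elements of V(K_n)∪E(K_n) are coloured 1 and exactly k² elements are coloured 2; if n = 2k+1 then exactly (k+1)² elements are coloured 1 and exactly k(k+1) elements are coloured 2. -/

import Mathlib

open Finset

variable {V : Type*} [Fintype V] [DecidableEq V]

/-- The vertex sum at `v` induced by an edge colouring `γ`:
the sum of the colours of the edges incident with `v`. -/
def vSum (G : SimpleGraph V) [DecidableRel G.Adj] (γ : Sym2 V → ℕ) (v : V) : ℕ :=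
  ∑ u ∈ G.neighborFinset v, γ s(v, u)

/-- `γ` is an edge `k`-colouring: every edge gets a colour in `{1, …, k}`. -/
def IsEdgeKColoring (G : SimpleGraph V) (k : ℕ) (γ : Sym2 V → ℕ) : Prop :=
  ∀ e ∈ G.edgeSet, 1 ≤ γ e ∧ γ e ≤ k

/-- `γ` is a neighbour-sum-distinguishing edge colouring. -/
def NsdEdge (G : SimpleGraph V) [DecidableRel G.Adj] (γ : Sym2 V → ℕ) : Prop :=
  ∀ ⦃u v : V⦄, G.Adj u v → vSum G γ u ≠ vSum G γ v

/-- The number of edges of `G` coloured `i` by `γ`. -/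
def edgeClassCard (G : SimpleGraph V) [DecidableRel G.Adj] (γ : Sym2 V → ℕ) (i : ℕ) : ℕ :=
  (G.edgeFinset.filter fun e => γ e = i).card

/-- `γ` is equitable as an edge `k`-colouring: any two colour classes among
`{1, …, k}` have sizes differing by at most one. -/
def EquitableEdge (G : SimpleGraph V) [DecidableRel G.Adj] (k : ℕ) (γ : Sym2 V → ℕ) : Prop :=
  ∀ i ∈ Finset.Icc 1 k, ∀ j ∈ Finset.Icc 1 k,
    edgeClassCard G γ i ≤ edgeClassCard G γ j + 1

/-- `G` admits an equitable neighbour-sum-distinguishing edge `k`-colouring. -/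
def HasEqNsdEdge (G : SimpleGraph V) [DecidableRel G.Adj] (k : ℕ) : Prop :=
  ∃ γ : Sym2 V → ℕ, IsEdgeKColoring G k γ ∧ NsdEdge G γ ∧ EquitableEdge G k γ

/-- The total vertex sum at `v` induced by a total colouring `(fv, fe)`. -/
def tSum (G : SimpleGraph V) [DecidableRel G.Adj] (fv : V → ℕ) (fe : Sym2 V → ℕ) (v : V) : ℕ :=
  fv v + vSum G fe v

/-- `(fv, fe)` is a total `k`-colouring: each vertex and edge gets a colour in `{1, …, k}`. -/
def IsTotalKColoring (G : SimpleGraph V) (k : ℕ) (fv : V → ℕ) (fe : Sym2 V → ℕ) : Prop :=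
  (∀ v : V, 1 ≤ fv v ∧ fv v ≤ k) ∧ ∀ e ∈ G.edgeSet, 1 ≤ fe e ∧ fe e ≤ k

/-- `(fv, fe)` is a neighbour-sum-distinguishing total colouring. -/
def NsdTotal (G : SimpleGraph V) [DecidableRel G.Adj] (fv : V → ℕ) (fe : Sym2 V → ℕ) : Prop :=
  ∀ ⦃u v : V⦄, G.Adj u v → tSum G fv fe u ≠ tSum G fv fe v

/-- The number of elements (vertices and edges) of `G` coloured `i`. -/
def totalClassCard (G : SimpleGraph V) [DecidableRel G.Adj]
    (fv : V → ℕ) (fe : Sym2 V → ℕ) (i : ℕ) : ℕ :=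
  (Finset.univ.filter fun v => fv v = i).card + edgeClassCard G fe i

/-- `(fv, fe)` is equitable as a total `k`-colouring. -/
def EquitableTotal (G : SimpleGraph V) [DecidableRel G.Adj] (k : ℕ)
    (fv : V → ℕ) (fe : Sym2 V → ℕ) : Prop :=
  ∀ i ∈ Finset.Icc 1 k, ∀ j ∈ Finset.Icc 1 k,
    totalClassCard G fv fe i ≤ totalClassCard G fv fe j + 1

/-- `G` admits an equitable neighbour-sum-distinguishing total `k`-colouring. -/
def HasEqNsdTotal (G : SimpleGraph V) [DecidableRel G.Adj] (k : ℕ) : Prop :=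
  ∃ (fv : V → ℕ) (fe : Sym2 V → ℕ),
    IsTotalKColoring G k fv fe ∧ NsdTotal G fv fe ∧ EquitableTotal G k fv fe

instance {W : Type*} [DecidableEq W] : DecidableRel (SimpleGraph.completeGraph W).Adj := fun a b =>
  inferInstanceAs (Decidable (a ≠ b))

section NsdAux

lemma my_fin_count (n c : ℕ) :
    ((univ : Finset (Fin n)).filter fun j : Fin n => c ≤ (j:ℕ)).card = n - c := by
  have h : ((univ : Finset (Fin n)).filter fun j : Fin n => c ≤ (j:ℕ)).card
      = (Finset.Ico c n).card := by
    refine Finset.card_nbij (fun j => (j:ℕ)) ?_ ?_ ?_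
    · intro a ha; simp only [mem_coe, coe_filter, Set.mem_setOf_eq, mem_filter, mem_univ, true_and] at ha
      simp only [mem_coe, Finset.mem_Ico]
      exact ⟨ha, a.isLt⟩
    · intro a _ b _ hab; exact Fin.val_injective hab
    · intro x hx
      simp only [Finset.coe_filter, Set.mem_setOf_eq, mem_coe, Finset.mem_Ico] at hx ⊢
      exact ⟨⟨x, hx.2⟩, by simp [hx.1], rfl⟩
  rw [h, Nat.card_Ico]

lemma my_upper_count (n : ℕ) (i : Fin n) (hi : n ≤ 2 * (i:ℕ)) :
    ((univ : Finset (Fin n)).filter fun j : Fin n => n - (i:ℕ) ≤ (j:ℕ) ∧ j ≠ i).card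
      = (i:ℕ) - 1 := by
  have h1 : ((univ : Finset (Fin n)).filter fun j : Fin n => n - (i:ℕ) ≤ (j:ℕ) ∧ j ≠ i)
      = ((univ : Finset (Fin n)).filter fun j : Fin n => n - (i:ℕ) ≤ (j:ℕ)).erase i := by
    ext j
    simp only [mem_filter, mem_univ, true_and, Finset.mem_erase]
    tauto
  have hmem : i ∈ (univ : Finset (Fin n)).filter fun j : Fin n => n - (i:ℕ) ≤ (j:ℕ) := by
    simp only [mem_filter, mem_univ, true_and]
    omega
  rw [h1, Finset.card_erase_of_mem hmem, my_fin_count]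
  have := i.isLt; omega

theorem key_aux (n : ℕ) (fv : Fin n → ℕ) (fe : Sym2 (Fin n) → ℕ)
    (U : Fin n → Fin n)
    (hDS : ∀ i : Fin n,
      ((univ : Finset (Fin n)).filter fun j : Fin n => j ≠ i ∧ fe s(U i, U j) = 2).card
        + (if fv (U i) = 2 then 1 else 0) = (i : ℕ)) :
    ∀ i j : Fin n, j ≠ i → (fe s(U i, U j) = 2 ↔ n ≤ (i:ℕ) + (j:ℕ)) := by
  suffices H : ∀ m : ℕ, ∀ i : Fin n, min (2*(i:ℕ)) (2*(n-1-(i:ℕ))+1) < m →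
      ∀ j, j ≠ i → (fe s(U i, U j) = 2 ↔ n ≤ (i:ℕ) + (j:ℕ)) by
    intro i j hj
    exact H (min (2*(i:ℕ)) (2*(n-1-(i:ℕ))+1) + 1) i (Nat.lt_succ_self _) j hj
  intro m
  induction m with
  | zero => intro i h; omega
  | succ m ih =>
    intro i hμ j hj
    have hin : (i:ℕ) < n := i.isLt
    have hDle : ((univ : Finset (Fin n)).filter
        fun j : Fin n => j ≠ i ∧ fe s(U i, U j) = 2).card ≤ (i:ℕ) := by
      have := hDS i; omega
    by_cases hcase : 2*(i:ℕ) < n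
    · -- lower row: every index j' with n ≤ i + j' is already known to be a 2-neighbour
      have hup : ∀ j' : Fin n, n ≤ (i:ℕ) + (j':ℕ) → fe s(U i, U j') = 2 := by
        intro j' hj'
        have hj'n : (j':ℕ) < n := j'.isLt
        have hne : i ≠ j' := by intro h; rw [h] at hcase; omega
        have hrow := ih j' (by omega) i hne
        rw [show s(U i, U j') = s(U j', U i) from Sym2.eq_swap]
        exact hrow.mpr (by omega)
      have hsub : ((univ : Finset (Fin n)).filter fun j' : Fin n => n - (i:ℕ) ≤ (j':ℕ))
          ⊆ (univ : Finset (Fin n)).filter fun j' : Fin n => j' ≠ i ∧ fe s(U i, U j') = 2 := by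
        intro j' hj'
        simp only [mem_filter, mem_univ, true_and] at hj' ⊢
        have hj'n : (j':ℕ) < n := j'.isLt
        refine ⟨?_, hup j' (by omega)⟩
        intro h; rw [h] at hj'; omega
      have hcard1 : ((univ : Finset (Fin n)).filter
          fun j' : Fin n => n - (i:ℕ) ≤ (j':ℕ)).card = (i:ℕ) := by
        rw [my_fin_count]; omega
      have heq := Finset.eq_of_subset_of_card_le hsub (by omega)
      constructor
      · intro h2
        have hjF : j ∈ (univ : Finset (Fin n)).filter
            fun j' : Fin n => j' ≠ i ∧ fe s(U i, U j') = 2 := by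
          simp only [mem_filter, mem_univ, true_and]; exact ⟨hj, h2⟩
        rw [← heq] at hjF
        simp only [mem_filter, mem_univ, true_and] at hjF
        omega
      · intro h
        have hjF : j ∈ (univ : Finset (Fin n)).filter
            fun j' : Fin n => n - (i:ℕ) ≤ (j':ℕ) := by
          simp only [mem_filter, mem_univ, true_and]; omega
        rw [heq] at hjF
        simp only [mem_filter, mem_univ, true_and] at hjF
        exact hjF.2
    · -- upper row
      have hni : n ≤ 2*(i:ℕ) := by omega
      have hlow : ∀ j' : Fin n, (j':ℕ) + (i:ℕ) < n → ¬ fe s(U i, U j') = 2 := by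
        intro j' hj' h2
        have hne : i ≠ j' := by intro h; rw [h] at hj'; omega
        have hrow := ih j' (by have := j'.isLt; omega) i hne
        rw [show s(U i, U j') = s(U j', U i) from Sym2.eq_swap] at h2
        have := hrow.mp h2; omega
      have hsub : ((univ : Finset (Fin n)).filter
            fun j' : Fin n => j' ≠ i ∧ fe s(U i, U j') = 2)
          ⊆ (univ : Finset (Fin n)).filter
            fun j' : Fin n => n - (i:ℕ) ≤ (j':ℕ) ∧ j' ≠ i := by
        intro j' hj'
        simp only [mem_filter, mem_univ, true_and] at hj' ⊢
        refine ⟨?_, hj'.1⟩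
        by_contra hcon
        exact hlow j' (by omega) hj'.2
      have hcard1 := my_upper_count n i hni
      have hite : (if fv (U i) = 2 then 1 else 0) ≤ 1 := by split <;> omega
      have hDge : (i:ℕ) - 1 ≤ ((univ : Finset (Fin n)).filter
          fun j : Fin n => j ≠ i ∧ fe s(U i, U j) = 2).card := by
        have h := hDS i
        omega
      have heq := Finset.eq_of_subset_of_card_le
        (t := (univ : Finset (Fin n)).filter
            fun j' : Fin n => n - (i:ℕ) ≤ (j':ℕ) ∧ j' ≠ i) hsub ?hc
      case hc =>
        omega
      constructor
      · intro h2
        have hjF : j ∈ (univ : Finset (Fin n)).filter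
            fun j' : Fin n => n - (i:ℕ) ≤ (j':ℕ) ∧ j' ≠ i := by
          rw [← heq]
          simp only [mem_filter, mem_univ, true_and]; exact ⟨hj, h2⟩
        simp only [mem_filter, mem_univ, true_and] at hjF
        omega
      · intro h
        have hjF : j ∈ (univ : Finset (Fin n)).filter
            fun j' : Fin n => n - (i:ℕ) ≤ (j':ℕ) ∧ j' ≠ i := by
          simp only [mem_filter, mem_univ, true_and]
          exact ⟨by omega, hj⟩
        rw [← heq] at hjF
        simp only [mem_filter, mem_univ, true_and] at hjF
        exact hjF.2

/-- The graph of `2`-coloured edges. -/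
def Hgr (n : ℕ) (fe : Sym2 (Fin n) → ℕ) : SimpleGraph (Fin n) where
  Adj a b := a ≠ b ∧ fe s(a, b) = 2
  symm := by
    constructor
    intro a b h
    exact ⟨h.1.symm, by rw [Sym2.eq_swap]; exact h.2⟩
  loopless := by constructor; intro a h; exact h.1 rfl

instance (n : ℕ) (fe : Sym2 (Fin n) → ℕ) : DecidableRel (Hgr n fe).Adj :=
  fun a b => inferInstanceAs (Decidable (a ≠ b ∧ fe s(a, b) = 2))

lemma Hgr_degree (n : ℕ) (fe : Sym2 (Fin n) → ℕ) (u : Fin n) :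
    (Hgr n fe).degree u
      = ((univ : Finset (Fin n)).filter fun w => w ≠ u ∧ fe s(u, w) = 2).card := by
  rw [← SimpleGraph.card_neighborFinset_eq_degree, SimpleGraph.neighborFinset_eq_filter]
  congr 1
  apply Finset.filter_congr
  intro w _
  show (Hgr n fe).Adj u w ↔ _
  constructor
  · rintro ⟨h1, h2⟩; exact ⟨h1.symm, h2⟩
  · rintro ⟨h1, h2⟩; exact ⟨h1.symm, h2⟩

lemma Hgr_edgeFinset (n : ℕ) (fe : Sym2 (Fin n) → ℕ) :
    (Hgr n fe).edgeFinset
      = (SimpleGraph.completeGraph (Fin n)).edgeFinset.filter fun e => fe e = 2 := by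
  ext e
  induction e using Sym2.ind with
  | _ a b =>
    simp only [SimpleGraph.mem_edgeFinset, mem_filter, SimpleGraph.mem_edgeSet]
    show (a ≠ b ∧ fe s(a, b) = 2) ↔ _
    constructor
    · rintro ⟨h1, h2⟩; exact ⟨h1, h2⟩
    · rintro ⟨h1, h2⟩; exact ⟨h1, h2⟩

lemma final_even (k V1 V2 E1 E2 M T Q : ℕ)
    (h1 : V2 = 2*k - (2*k+1)/2) (h2 : V1 + V2 = 2*k) (h3 : E1 + E2 = M)
    (h4 : 2*M + 2*k = 4*Q) (h5 : 2*T + 2*k = 4*Q) (h6 : 2*E2 + V2 = T) :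
    V1 + E1 = Q + k ∧ V2 + E2 = Q := by omega

lemma final_odd (k V1 V2 E1 E2 M T Q : ℕ)
    (h1 : V2 = (2*k+1) - (2*k+2)/2) (h2 : V1 + V2 = 2*k+1) (h3 : E1 + E2 = M)
    (h4 : 2*M + (2*k+1) = 4*Q + 4*k + 1) (h5 : 2*T + (2*k+1) = 4*Q + 4*k + 1)
    (h6 : 2*E2 + V2 = T) :
    V1 + E1 = Q + 2*k + 1 ∧ V2 + E2 = Q + k := by omega

lemma nn_sq (n : ℕ) : n * (n - 1) + n = n * n := by
  cases n with
  | zero => simp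
  | succ m => simp [Nat.succ_sub_one]; ring

end NsdAux

/-- In an nsd total `2`-colouring of `K_n` (`n ≥ 2`) having a vertex with a
monochromatic palette of `1`'s, if `n = 2k` then exactly `k(k+1)` elements are
coloured `1` and `k²` are coloured `2`, and if `n = 2k+1` then exactly `(k+1)²`
elements are coloured `1` and `k(k+1)` are coloured `2`. -/
theorem nsd_total_two_coloring_class_sizes (n : ℕ) (hn : 2 ≤ n)
    (fv : Fin n → ℕ) (fe : Sym2 (Fin n) → ℕ)
    (hcol : IsTotalKColoring (SimpleGraph.completeGraph (Fin n)) 2 fv fe)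
    (hnsd : NsdTotal (SimpleGraph.completeGraph (Fin n)) fv fe)
    (v : Fin n) (hv : fv v = 1) (hve : ∀ u : Fin n, u ≠ v → fe s(v, u) = 1) :
    (∀ k : ℕ, n = 2 * k →
      totalClassCard (SimpleGraph.completeGraph (Fin n)) fv fe 1 = k * (k + 1) ∧
      totalClassCard (SimpleGraph.completeGraph (Fin n)) fv fe 2 = k ^ 2) ∧
    (∀ k : ℕ, n = 2 * k + 1 →
      totalClassCard (SimpleGraph.completeGraph (Fin n)) fv fe 1 = (k + 1) ^ 2 ∧
      totalClassCard (SimpleGraph.completeGraph (Fin n)) fv fe 2 = k * (k + 1)) := by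
  classical
  have hfvm : ∀ u, fv u = 1 ∨ fv u = 2 := fun u => by have := hcol.1 u; omega
  have hfem : ∀ a b : Fin n, a ≠ b → fe s(a, b) = 1 ∨ fe s(a, b) = 2 := by
    intro a b hab
    have := hcol.2 s(a, b) (by rwa [SimpleGraph.mem_edgeSet])
    omega
  -- the "2-degree" based palette sum
  set S : Fin n → ℕ := fun u =>
    (if fv u = 2 then 1 else 0) +
      ((univ : Finset (Fin n)).filter fun w => w ≠ u ∧ fe s(u, w) = 2).card with hSdef
  have htS : ∀ u, tSum (SimpleGraph.completeGraph (Fin n)) fv fe u = n + S u := by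
    intro u
    have hnb : (SimpleGraph.completeGraph (Fin n)).neighborFinset u
        = univ.filter fun w => w ≠ u := by
      ext w
      simp [SimpleGraph.mem_neighborFinset, ne_comm]
    have hv1 : vSum (SimpleGraph.completeGraph (Fin n)) fe u
        = ∑ w ∈ univ.filter (fun w : Fin n => w ≠ u), fe s(u, w) := by
      rw [vSum, hnb]
    have hsum : ∑ w ∈ univ.filter (fun w : Fin n => w ≠ u), fe s(u, w)
        = ∑ w ∈ univ.filter (fun w : Fin n => w ≠ u),
            (1 + if fe s(u, w) = 2 then 1 else 0) := by
      refine Finset.sum_congr rfl ?_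
      intro w hw
      simp only [mem_filter, mem_univ, true_and] at hw
      rcases hfem u w (Ne.symm hw) with h | h <;> simp [h]
    have hcardne : (univ.filter fun w : Fin n => w ≠ u).card = n - 1 := by
      rw [Finset.filter_ne', Finset.card_erase_of_mem (mem_univ u), Finset.card_univ,
        Fintype.card_fin]
    have hboole : ∑ w ∈ univ.filter (fun w : Fin n => w ≠ u),
          (if fe s(u, w) = 2 then 1 else 0)
        = ((univ : Finset (Fin n)).filter fun w => w ≠ u ∧ fe s(u, w) = 2).card := by
      rw [Finset.sum_boole, Finset.filter_filter, Nat.cast_id]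
    rw [tSum, hv1, hsum, Finset.sum_add_distrib, Finset.sum_const, smul_eq_mul, mul_one,
      hcardne, hboole, hSdef]
    rcases hfvm u with h | h <;> simp only [h] <;> simp <;> omega
  have hSlt : ∀ u, S u < n := by
    intro u
    by_cases hu : u = v
    · subst hu
      have h1 : ((univ : Finset (Fin n)).filter fun w => w ≠ u ∧ fe s(u, w) = 2).card = 0 := by
        rw [Finset.card_eq_zero, Finset.filter_eq_empty_iff]
        rintro w _ ⟨hwv, h2⟩
        rw [hve w hwv] at h2; omega
      have : S u = 0 := by rw [hSdef]; simp [h1, hv]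
      omega
    · have hsub : ((univ : Finset (Fin n)).filter fun w => w ≠ u ∧ fe s(u, w) = 2)
          ⊆ (univ.erase u).erase v := by
        intro w hw
        simp only [mem_filter, mem_univ, true_and] at hw
        simp only [Finset.mem_erase, mem_univ, and_true]
        refine ⟨?_, hw.1⟩
        rintro rfl
        have h2 := hw.2
        rw [Sym2.eq_swap, hve u hu] at h2
        omega
      have hcard : (((univ : Finset (Fin n)).erase u).erase v).card = n - 2 := by
        rw [Finset.card_erase_of_mem, Finset.card_erase_of_mem (mem_univ u),
          Finset.card_univ, Fintype.card_fin]
        · omega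
        · exact Finset.mem_erase.mpr ⟨fun h => hu h.symm, mem_univ v⟩
      have hle := Finset.card_le_card hsub
      have hite : (if fv u = 2 then 1 else 0) ≤ 1 := by split <;> omega
      have hSeq : S u = (if fv u = 2 then 1 else 0)
          + ((univ : Finset (Fin n)).filter fun w => w ≠ u ∧ fe s(u, w) = 2).card := rfl
      omega
  have hinj : Function.Injective fun u => (⟨S u, hSlt u⟩ : Fin n) := by
    intro a b hab
    by_contra hne
    have hadj : (SimpleGraph.completeGraph (Fin n)).Adj a b := hne
    refine hnsd hadj ?_
    rw [htS a, htS b]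
    have : S a = S b := congrArg Fin.val hab
    omega
  obtain ⟨eqv, heqv⟩ : ∃ e : Fin n ≃ Fin n, ∀ u, e u = ⟨S u, hSlt u⟩ :=
    ⟨Equiv.ofBijective _ (Finite.injective_iff_bijective.mp hinj), fun u => rfl⟩
  set U : Fin n ≃ Fin n := eqv.symm with hUdef
  have hSU : ∀ i, S (U i) = (i : ℕ) := by
    intro i
    have h := heqv (U i)
    rw [hUdef, Equiv.apply_symm_apply] at h
    exact (congrArg Fin.val h).symm
  have hcardswap : ∀ i : Fin n,
      ((univ : Finset (Fin n)).filter fun j : Fin n => j ≠ i ∧ fe s(U i, U j) = 2).card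
        = ((univ : Finset (Fin n)).filter fun w => w ≠ U i ∧ fe s(U i, w) = 2).card := by
    intro i
    refine Finset.card_equiv U ?_
    intro j
    simp only [mem_filter, mem_univ, true_and]
    constructor
    · rintro ⟨h1, h2⟩; exact ⟨fun h => h1 (U.injective h), h2⟩
    · rintro ⟨h1, h2⟩; exact ⟨fun h => h1 (congrArg U h), h2⟩
  have hDS : ∀ i : Fin n,
      ((univ : Finset (Fin n)).filter fun j : Fin n => j ≠ i ∧ fe s(U i, U j) = 2).card
        + (if fv (U i) = 2 then 1 else 0) = (i : ℕ) := by
    intro i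
    rw [hcardswap i]
    have h := hSU i
    have hSeq : S (U i) = (if fv (U i) = 2 then 1 else 0)
        + ((univ : Finset (Fin n)).filter fun w => w ≠ U i ∧ fe s(U i, w) = 2).card := rfl
    omega
  have hstruct := key_aux n fv fe (fun i => U i) hDS
  -- colour of each vertex is determined
  have hfv2 : ∀ i : Fin n, (fv (U i) = 2 ↔ n ≤ 2 * (i : ℕ)) := by
    intro i
    have hD := hDS i
    have hfe_eq : ((univ : Finset (Fin n)).filter
          fun j : Fin n => j ≠ i ∧ fe s(U i, U j) = 2)
        = (univ : Finset (Fin n)).filter fun j : Fin n => j ≠ i ∧ n ≤ (i:ℕ) + (j:ℕ) := by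
      refine Finset.filter_congr ?_
      intro j _
      exact and_congr_right fun hj => hstruct i j hj
    by_cases hc : n ≤ 2 * (i : ℕ)
    · have h2 : ((univ : Finset (Fin n)).filter
            fun j : Fin n => j ≠ i ∧ n ≤ (i:ℕ) + (j:ℕ))
          = (univ : Finset (Fin n)).filter
            fun j : Fin n => n - (i:ℕ) ≤ (j:ℕ) ∧ j ≠ i := by
        refine Finset.filter_congr ?_
        intro j _
        have := j.isLt; have := i.isLt
        constructor
        · rintro ⟨h1, h2⟩; exact ⟨by omega, h1⟩
        · rintro ⟨h1, h2⟩; exact ⟨h2, by omega⟩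
      rw [hfe_eq, h2, my_upper_count n i hc] at hD
      have hilt := i.isLt
      simp only [hc, iff_true]
      by_contra h2v
      rw [if_neg h2v] at hD
      omega
    · have h2 : ((univ : Finset (Fin n)).filter
            fun j : Fin n => j ≠ i ∧ n ≤ (i:ℕ) + (j:ℕ))
          = (univ : Finset (Fin n)).filter fun j : Fin n => n - (i:ℕ) ≤ (j:ℕ) := by
        refine Finset.filter_congr ?_
        intro j _
        have := j.isLt; have := i.isLt
        constructor
        · rintro ⟨h1, h2⟩; omega
        · intro h
          refine ⟨fun he => ?_, by omega⟩
          rw [he] at h; omega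
      rw [hfe_eq, h2, my_fin_count] at hD
      have hilt := i.isLt
      simp only [hc, iff_false]
      intro h2v
      rw [if_pos h2v] at hD
      omega
  -- vertex class-2 count
  have hVidx : ((univ : Finset (Fin n)).filter fun i : Fin n => fv (U i) = 2).card
      = n - (n + 1) / 2 := by
    have h2 : ((univ : Finset (Fin n)).filter fun i : Fin n => fv (U i) = 2)
        = (univ : Finset (Fin n)).filter fun i : Fin n => (n + 1) / 2 ≤ (i : ℕ) := by
      refine Finset.filter_congr ?_
      intro i _
      rw [hfv2 i]
      omega
    rw [h2, my_fin_count]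
  have hV2 : ((univ : Finset (Fin n)).filter fun u => fv u = 2).card = n - (n + 1) / 2 := by
    rw [← hVidx]
    refine (Finset.card_equiv U ?_).symm
    intro i
    simp only [mem_filter, mem_univ, true_and]
  -- vertex classes partition
  have hVsum : ((univ : Finset (Fin n)).filter fun u => fv u = 1).card
      + ((univ : Finset (Fin n)).filter fun u => fv u = 2).card = n := by
    have h := Finset.card_filter_add_card_filter_not
      (s := (univ : Finset (Fin n))) (p := fun u : Fin n => fv u = 1)
    rw [Finset.card_univ, Fintype.card_fin] at h
    have hneg : ((univ : Finset (Fin n)).filter fun u : Fin n => ¬ fv u = 1)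
        = (univ : Finset (Fin n)).filter fun u => fv u = 2 := by
      refine Finset.filter_congr ?_
      intro u _
      rcases hfvm u with h1 | h1 <;> simp [h1]
    rw [hneg] at h
    exact h
  -- edge class-2 count via the handshake lemma on Hgr
  have hEc2 : edgeClassCard (SimpleGraph.completeGraph (Fin n)) fe 2 = (Hgr n fe).edgeFinset.card := by
    rw [edgeClassCard, Hgr_edgeFinset]
  have hhand := SimpleGraph.sum_degrees_eq_twice_card_edges (Hgr n fe)
  have hsumdeg : ∑ u : Fin n, (Hgr n fe).degree u
      = ∑ i : Fin n, ((univ : Finset (Fin n)).filter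
          fun j : Fin n => j ≠ i ∧ fe s(U i, U j) = 2).card := by
    rw [← Equiv.sum_comp U (fun u => (Hgr n fe).degree u)]
    refine Finset.sum_congr rfl ?_
    intro i _
    rw [Hgr_degree, ← hcardswap i]
  have hsum2 : ∑ i : Fin n,
      (((univ : Finset (Fin n)).filter
          fun j : Fin n => j ≠ i ∧ fe s(U i, U j) = 2).card
        + (if fv (U i) = 2 then 1 else 0)) = ∑ i : Fin n, (i : ℕ) :=
    Finset.sum_congr rfl fun i _ => hDS i
  have hsumeps : ∑ i : Fin n, (if fv (U i) = 2 then 1 else 0) = n - (n + 1) / 2 := by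
    rw [Finset.sum_boole, Nat.cast_id, hVidx]
  have hT2 : (∑ i : Fin n, (i : ℕ)) * 2 = n * (n - 1) := by
    rw [Fin.sum_univ_eq_sum_range (fun i => i) n]
    exact Finset.sum_range_id_mul_two n
  rw [Finset.sum_add_distrib, hsumeps] at hsum2
  rw [hsumdeg] at hhand
  -- edge classes partition
  have hEsum : edgeClassCard (SimpleGraph.completeGraph (Fin n)) fe 1
      + edgeClassCard (SimpleGraph.completeGraph (Fin n)) fe 2
      = (SimpleGraph.completeGraph (Fin n)).edgeFinset.card := by
    rw [edgeClassCard, edgeClassCard]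
    have h := Finset.card_filter_add_card_filter_not
      (s := (SimpleGraph.completeGraph (Fin n)).edgeFinset) (p := fun e => fe e = 1)
    have hneg : ((SimpleGraph.completeGraph (Fin n)).edgeFinset.filter fun e => ¬ fe e = 1)
        = (SimpleGraph.completeGraph (Fin n)).edgeFinset.filter fun e => fe e = 2 := by
      refine Finset.filter_congr ?_
      intro e he
      have := hcol.2 e (SimpleGraph.mem_edgeFinset.mp he)
      omega
    rw [hneg] at h
    exact h
  have hM : 2 * (SimpleGraph.completeGraph (Fin n)).edgeFinset.card = n * (n - 1) := by
    have h := SimpleGraph.sum_degrees_eq_twice_card_edges (SimpleGraph.completeGraph (Fin n))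
    have hdeg : ∀ u : Fin n, (SimpleGraph.completeGraph (Fin n)).degree u = n - 1 := by
      intro u
      rw [← SimpleGraph.card_neighborFinset_eq_degree]
      have hnb : (SimpleGraph.completeGraph (Fin n)).neighborFinset u
          = univ.filter fun w => w ≠ u := by
        ext w
        simp [SimpleGraph.mem_neighborFinset, ne_comm]
      rw [hnb, Finset.filter_ne', Finset.card_erase_of_mem (mem_univ u),
        Finset.card_univ, Fintype.card_fin]
    rw [Finset.sum_congr rfl (fun u _ => hdeg u), Finset.sum_const, Finset.card_univ,
      Fintype.card_fin, smul_eq_mul] at h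
    omega
  -- final arithmetic
  have hsq := nn_sq n
  have hTn : 2 * (∑ i : Fin n, (i : ℕ)) + n = n * n := by omega
  have hMn : 2 * (SimpleGraph.completeGraph (Fin n)).edgeFinset.card + n = n * n := by omega
  have hE2n : 2 * edgeClassCard (SimpleGraph.completeGraph (Fin n)) fe 2
      + (n - (n + 1) / 2) = ∑ i : Fin n, (i : ℕ) := by
    rw [hEc2]
    omega
  constructor
  · intro k hk
    have hnnk : n * n = 4 * (k * k) := by rw [hk]; ring
    have hfin := final_even k
      ((univ : Finset (Fin n)).filter fun u => fv u = 1).card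
      ((univ : Finset (Fin n)).filter fun u => fv u = 2).card
      (edgeClassCard (SimpleGraph.completeGraph (Fin n)) fe 1)
      (edgeClassCard (SimpleGraph.completeGraph (Fin n)) fe 2)
      ((SimpleGraph.completeGraph (Fin n)).edgeFinset.card)
      (∑ i : Fin n, (i : ℕ)) (k * k)
      (by omega) (by omega) hEsum (by omega) (by omega) (by omega)
    constructor
    · show ((univ : Finset (Fin n)).filter fun u => fv u = 1).card
        + edgeClassCard (SimpleGraph.completeGraph (Fin n)) fe 1 = k * (k + 1)
      rw [hfin.1]; ring
    · show ((univ : Finset (Fin n)).filter fun u => fv u = 2).card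
        + edgeClassCard (SimpleGraph.completeGraph (Fin n)) fe 2 = k ^ 2
      rw [hfin.2]; ring
  · intro k hk
    have hnnk : n * n = 4 * (k * k) + 4 * k + 1 := by rw [hk]; ring
    have hfin := final_odd k
      ((univ : Finset (Fin n)).filter fun u => fv u = 1).card
      ((univ : Finset (Fin n)).filter fun u => fv u = 2).card
      (edgeClassCard (SimpleGraph.completeGraph (Fin n)) fe 1)
      (edgeClassCard (SimpleGraph.completeGraph (Fin n)) fe 2)
      ((SimpleGraph.completeGraph (Fin n)).edgeFinset.card)
      (∑ i : Fin n, (i : ℕ)) (k * k)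
      (by omega) (by omega) hEsum (by omega) (by omega) (by omega)
    constructor
    · show ((univ : Finset (Fin n)).filter fun u => fv u = 1).card
        + edgeClassCard (SimpleGraph.completeGraph (Fin n)) fe 1 = (k + 1) ^ 2
      rw [hfin.1]; ring
    · show ((univ : Finset (Fin n)).filter fun u => fv u = 2).card
        + edgeClassCard (SimpleGraph.completeGraph (Fin n)) fe 2 = k * (k + 1)
      rw [hfin.2]; ring
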